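/- With g = sl(n+2,ℝ) in the contact grading, the element s = diag(-1, I_n, -1) is, up to the center of GL(n+2,ℝ) (scalar matrices), the unique invertible matrix g₀ normalizing the decomposition g = n ⊕ h with Ad(g₀)|_h = id and Ad(g₀)|_n = -id. Equivalently: if g₀ ∈ GL(n+2, ℝ) satisfies g₀ X g₀⁻¹ = X for all X ∈ h and g₀ X g₀⁻¹ = -X for all X ∈ n, then g₀ = μ·diag(-1, I_n, -1) for some nonzero scalar μ. -/

import Mathlib

open Matrix

/-- Index type for `(n+2)×(n+2)` matrices in block form with blocks of sizes `1, n, 1`. -/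
abbrev CIdx (n : ℕ) := Fin 1 ⊕ Fin n ⊕ Fin 1

/-- Block number (1, 2 or 3) of an index. -/
def cblk {n : ℕ} : CIdx n → ℤ
  | .inl _ => 1
  | .inr (.inl _) => 2
  | .inr (.inr _) => 3

/-- The grading components of `sl(n+2, ℝ)` for the contact grading: `cg n k` consists of
the traceless matrices supported on the block positions `(r,s)` with `s - r = k`
(blocks numbered 1, 2, 3, of sizes 1, n, 1).  So `cg n (-2)` is the lower-left corner
entry, `cg n (-1)` the `(2,1)` and `(3,2)` blocks, `cg n 0` the traceless block-diagonal
part, etc., and `cg n k = {0}` for `|k| > 2`. -/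
def cg (n : ℕ) (k : ℤ) : Set (Matrix (CIdx n) (CIdx n) ℝ) :=
  {X | Matrix.trace X = 0 ∧ ∀ a b, cblk b - cblk a ≠ k → X a b = 0}

/-- `h = g₋₂ ⊕ g₀ ⊕ g₂`: traceless matrices supported on blocks of even degree. -/
def hSet (n : ℕ) : Set (Matrix (CIdx n) (CIdx n) ℝ) :=
  {X | Matrix.trace X = 0 ∧
    ∀ a b, ¬(cblk b - cblk a = -2 ∨ cblk b - cblk a = 0 ∨ cblk b - cblk a = 2) → X a b = 0}

/-- `n = g₋₁ ⊕ g₁`: matrices supported on blocks of odd degree. -/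
def nSet (n : ℕ) : Set (Matrix (CIdx n) (CIdx n) ℝ) :=
  {X | ∀ a b, ¬(cblk b - cblk a = -1 ∨ cblk b - cblk a = 1) → X a b = 0}

/-- The diagonal matrix `s = diag(-1, I_n, -1)` (determinant 1). -/
def sMat (n : ℕ) : Matrix (CIdx n) (CIdx n) ℝ :=
  Matrix.diagonal (fun a => match a with
    | .inl _ => -1
    | .inr (.inl _) => 1
    | .inr (.inr _) => -1)

/-- Uniqueness up to scalars: any invertible matrix `g₀` with `Ad(g₀) = id` on
`h = g₋₂ ⊕ g₀ ⊕ g₂` and `Ad(g₀) = -id` on `n = g₋₁ ⊕ g₁` is a nonzero scalar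
multiple of `s = diag(-1, I_n, -1)`. -/
theorem ad_minus_id_unique_up_to_center (n : ℕ) (hn : 0 < n)
    (g : Matrix (CIdx n) (CIdx n) ℝ) (hg : IsUnit g.det)
    (h1 : ∀ X ∈ hSet n, g * X * g⁻¹ = X)
    (h2 : ∀ X ∈ nSet n, g * X * g⁻¹ = -X) :
    ∃ m : ℝ, m ≠ 0 ∧ g = m • sMat n := by
  classical
  have hinv : g⁻¹ * g = 1 := Matrix.nonsing_inv_mul g hg
  -- anticommutation with odd standard basis matrices
  have anti : ∀ u v : CIdx n, (cblk v - cblk u = -1 ∨ cblk v - cblk u = 1) →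
      g * Matrix.single u v (1 : ℝ) = -(Matrix.single u v (1 : ℝ) * g) := by
    intro u v huv
    have hX : Matrix.single u v (1 : ℝ) ∈ nSet n := by
      intro p q hpq
      have hne : ¬(p = u ∧ q = v) := by
        rintro ⟨rfl, rfl⟩; exact hpq huv
      exact Matrix.single_apply_of_ne (i := u) (j := v) (c := (1:ℝ)) (i' := p) (j' := q) (by tauto)
    have h := h2 _ hX
    calc g * Matrix.single u v (1 : ℝ)
        = g * Matrix.single u v (1 : ℝ) * g⁻¹ * g := by
          rw [Matrix.mul_assoc, hinv, Matrix.mul_one]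
      _ = -(Matrix.single u v (1 : ℝ) * g) := by rw [h, neg_mul]
  set a : CIdx n := Sum.inl 0 with ha
  set c : CIdx n := Sum.inr (Sum.inr 0) with hc
  set i0 : CIdx n := Sum.inr (Sum.inl ⟨0, hn⟩) with hi0
  -- row i is zero off the diagonal, and g i i = -(g a a)
  have rowmid : ∀ i' : Fin n, (∀ q, q ≠ Sum.inr (Sum.inl i') →
      g (Sum.inr (Sum.inl i')) q = 0) ∧
      g (Sum.inr (Sum.inl i')) (Sum.inr (Sum.inl i')) = -(g a a) := by
    intro i'
    set i : CIdx n := Sum.inr (Sum.inl i') with hi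
    have h := anti a i (by right; simp [cblk, hi, ha])
    constructor
    · intro q hq
      have := congrFun (congrFun h a) q
      simp only [Matrix.neg_apply] at this
      rw [Matrix.mul_single_apply_of_ne 1 a i a q hq,
        Matrix.single_mul_apply_same 1 a i q g] at this
      linarith [this]
    · have := congrFun (congrFun h a) i
      simp only [Matrix.neg_apply] at this
      rw [Matrix.mul_single_apply_same 1 a i a,
        Matrix.single_mul_apply_same 1 a i i g] at this
      simp only [one_mul, mul_one] at this
      linarith [this]
  -- row a zero off diag
  have rowa : ∀ q, q ≠ a → g a q = 0 := by
    intro q hq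
    have h := anti i0 a (by left; simp [cblk, hi0, ha])
    have := congrFun (congrFun h i0) q
    simp only [Matrix.neg_apply] at this
    rw [Matrix.mul_single_apply_of_ne 1 i0 a i0 q hq,
      Matrix.single_mul_apply_same 1 i0 a q g] at this
    linarith [this]
  -- row c zero off diag, and g c c = -(g i0 i0)
  have hic := anti i0 c (by right; simp [cblk, hi0, hc])
  have rowc : ∀ q, q ≠ c → g c q = 0 := by
    intro q hq
    have := congrFun (congrFun hic i0) q
    simp only [Matrix.neg_apply] at this
    rw [Matrix.mul_single_apply_of_ne 1 i0 c i0 q hq,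
      Matrix.single_mul_apply_same 1 i0 c q g] at this
    linarith [this]
  have hcc : g c c = -(g i0 i0) := by
    have := congrFun (congrFun hic i0) c
    simp only [Matrix.neg_apply] at this
    rw [Matrix.mul_single_apply_same 1 i0 c i0,
      Matrix.single_mul_apply_same 1 i0 c c g] at this
    simp only [one_mul, mul_one] at this
    linarith [this]
  set m : ℝ := g i0 i0 with hm
  have haa : g a a = -m := by
    have h3 := (rowmid ⟨0, hn⟩).2
    rw [hm]
    rw [hi0]
    linarith [h3]
  have hgm : g = m • sMat n := by
    ext p q
    rcases eq_or_ne p q with rfl | hpq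
    · match p with
      | .inl x =>
        have hx : (Sum.inl x : CIdx n) = a := by
          rw [ha]; congr 1; exact Subsingleton.elim _ _
        rw [hx, haa]
        simp [sMat, Matrix.diagonal_apply_eq, ha]
      | .inr (.inl x) =>
        have h3 := (rowmid x).2
        rw [haa] at h3
        rw [h3]
        simp [sMat, Matrix.diagonal_apply_eq]
      | .inr (.inr x) =>
        have hx : (Sum.inr (Sum.inr x) : CIdx n) = c := by
          rw [hc]; congr 2; exact Subsingleton.elim _ _
        rw [hx, hcc]
        simp [sMat, Matrix.diagonal_apply_eq, hc]
    · have hz : g p q = 0 := by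
        match p with
        | .inl x =>
          have hx : (Sum.inl x : CIdx n) = a := by
            rw [ha]; congr 1; exact Subsingleton.elim _ _
          rw [hx]
          exact rowa q (hx ▸ hpq).symm
        | .inr (.inl x) => exact (rowmid x).1 q hpq.symm
        | .inr (.inr x) =>
          have hx : (Sum.inr (Sum.inr x) : CIdx n) = c := by
            rw [hc]; congr 2; exact Subsingleton.elim _ _
          rw [hx]
          exact rowc q (hx ▸ hpq).symm
      rw [hz]
      simp [sMat, Matrix.diagonal_apply_ne _ hpq]
  refine ⟨m, ?_, hgm⟩
  intro hm0
  rw [hm0, zero_smul] at hgm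
  rw [hgm, Matrix.det_zero] at hg
  simp at hg
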